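/- Suppose the Gauss–Bonnet operator D = d + δ is non-parabolic at infinity with respect to a finite subgraph G_K, and let G_K̃ be a neighborhood of G_K (a finite subgraph containing K, all edges of E_K together with the edge boundary ∂E_K, and all endpoints of its edges). Then for every finite subset U of G there is a constant C'(U) > 0 such that C'·‖(f,φ)‖_{ℓ²(U)} ≤ ‖D(f,φ)‖_{ℓ²(G)} + ‖(f,φ)‖_{ℓ²(G_K̃)} for all finitely supported f : V → ℝ and skewsymmetric φ : E → ℝ. -/

import Mathlib

open scoped BigOperators
open Function Filter

structure WGraph (V : Type*) where
  E : Set (V × V)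
  symm : ∀ e ∈ E, (e.2, e.1) ∈ E
  noloop : ∀ v : V, (v, v) ∉ E
  c : V → ℝ
  r : V × V → ℝ
  cpos : ∀ v, 0 < c v
  rpos : ∀ e, 0 < r e
  rsymm : ∀ e : V × V, r (e.2, e.1) = r e
  locfin : ∀ v : V, {e : V × V | e ∈ E ∧ e.1 = v}.Finite

variable {V : Type*}

/-- The difference operator `(df)(e) = f(e⁺) - f(e⁻)`. -/
def dOp (f : V → ℝ) : V × V → ℝ := fun e => f e.2 - f e.1

/-- The coboundary operator `(δφ)(x) = (1/c x) Σ_{e ∈ E, e⁺ = x} r e * φ e`. -/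
noncomputable def deltaOp (G : WGraph V) (φ : V × V → ℝ) : V → ℝ :=
  fun x => (G.c x)⁻¹ * ∑ᶠ e ∈ {e : V × V | e ∈ G.E ∧ e.2 = x}, G.r e * φ e

/-- Skewsymmetric function on oriented edges. -/
def Skew (φ : V × V → ℝ) : Prop := ∀ e : V × V, φ (e.2, e.1) = -φ e

/-- Finitely supported function. -/
def FinSupp {α β : Type*} [Zero β] (f : α → β) : Prop := (Function.support f).Finite

/-- Connectedness of a graph: any two vertices joined by a path of edges. -/
def WGraph.Connected (G : WGraph V) : Prop :=
  ∀ x y : V, ∃ n : ℕ, ∃ p : ℕ → V, p 0 = x ∧ p n = y ∧ ∀ i < n, (p i, p (i + 1)) ∈ G.E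

/-- Inner product on vertex functions: `Σ_x c x * f x * g x`. -/
noncomputable def innerV (G : WGraph V) (f g : V → ℝ) : ℝ := ∑ᶠ x : V, G.c x * (f x * g x)

/-- Inner product on edge functions: `(1/2) Σ_{e ∈ E} r e * φ e * ψ e`. -/
noncomputable def innerE (G : WGraph V) (φ ψ : V × V → ℝ) : ℝ :=
  (1 / 2) * ∑ᶠ e ∈ G.E, G.r e * (φ e * ψ e)

/-- Squared ℓ² norm of the pair `(f, φ)` restricted to vertices in `S` and edges in `T`. -/
noncomputable def sqnormOn (G : WGraph V) (S : Set V) (T : Set (V × V)) (f : V → ℝ)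
    (φ : V × V → ℝ) : ℝ :=
  (∑ᶠ x ∈ S, G.c x * f x ^ 2) + (1 / 2) * ∑ᶠ e ∈ T, G.r e * φ e ^ 2

/-- Edges of the subgraph induced by `K`. -/
def EK (G : WGraph V) (K : Set V) : Set (V × V) := {e ∈ G.E | e.1 ∈ K ∧ e.2 ∈ K}

/-- Edge boundary of `K`: edges with exactly one endpoint in `K`. -/
def edgeBdry (G : WGraph V) (K : Set V) : Set (V × V) :=
  {e ∈ G.E | (e.1 ∈ K ∧ e.2 ∉ K) ∨ (e.1 ∉ K ∧ e.2 ∈ K)}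

/-- `D = d + δ` is non-parabolic at infinity with respect to the finite subgraph on `K`. -/
noncomputable def NonParabolicAt (G : WGraph V) (K : Set V) : Prop :=
  ∀ VU : Set V, ∀ EU : Set (V × V), VU.Finite → EU.Finite →
    VU ⊆ Kᶜ → EU ⊆ G.E \ EK G K →
    ∃ C > 0, ∀ f : V → ℝ, ∀ φ : V × V → ℝ,
      FinSupp f → FinSupp φ → Skew φ →
      Function.support f ⊆ Kᶜ → Function.support φ ⊆ G.E \ EK G K →
      C * Real.sqrt (sqnormOn G VU EU f φ) ≤
        Real.sqrt (sqnormOn G Kᶜ (G.E \ EK G K) (deltaOp G φ) (dOp f))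

/-- `(Kt, Et)` is a (finite-subgraph) neighborhood of the subgraph on `K`. -/
def IsNbhd (G : WGraph V) (K Kt : Set V) (Et : Set (V × V)) : Prop :=
  Kt.Finite ∧ Et.Finite ∧ K ⊆ Kt ∧ EK G K ∪ edgeBdry G K ⊆ Et ∧ Et ⊆ G.E ∧
    ∀ e ∈ Et, e.1 ∈ Kt ∧ e.2 ∈ Kt

/-- Existence of a cycle in the graph. -/
def HasCycle (G : WGraph V) : Prop :=
  ∃ n : ℕ, 3 ≤ n ∧ ∃ p : ℕ → V, p n = p 0 ∧
    (∀ i j : ℕ, i < n → j < n → p i = p j → i = j) ∧ ∀ i < n, (p i, p (i + 1)) ∈ G.E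

/-- The outward edges of generation `m` in the two binary subtrees (`Ev` and `Bv` sides)
emanating from the vertex `x₀` of the triadic tree. -/
def genEdges (x₀ : V) (Ev Bv : ℕ → ℕ → V) : ℕ → Set (V × V)
  | 0 => {(x₀, Ev 0 0), (x₀, Bv 0 0)}
  | m + 1 => {p | ∃ k, k < 2 ^ (m + 1) ∧
      (p = (Ev m (k / 2), Ev (m + 1) k) ∨ p = (Bv m (k / 2), Bv (m + 1) k))}

/-- A set of oriented edges together with all reversed edges. -/
def symEdges (S : Set (V × V)) : Set (V × V) := {p | p ∈ S ∨ (p.2, p.1) ∈ S}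


private lemma sqrt_le_of_le_sq {a x : ℝ} (hx : 0 ≤ x) (h : a ≤ x ^ 2) :
    Real.sqrt a ≤ x := by
  calc Real.sqrt a ≤ Real.sqrt (x ^ 2) := Real.sqrt_le_sqrt h
  _ = x := Real.sqrt_sq hx

private lemma tri₀ {a b c : ℝ} (hb : 0 ≤ b) (hc : 0 ≤ c) (h : a ≤ b + c) :
    Real.sqrt a ≤ Real.sqrt b + Real.sqrt c := by
  apply sqrt_le_of_le_sq (by positivity)
  have h1 := Real.sq_sqrt hb
  have h2 := Real.sq_sqrt hc
  nlinarith [mul_nonneg (Real.sqrt_nonneg b) (Real.sqrt_nonneg c)]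

private lemma cauchy_w {α : Type*} (s : Finset α) (w u v : α → ℝ) (hw : ∀ a ∈ s, 0 ≤ w a) :
    ∑ a ∈ s, w a * (u a * v a) ≤
      Real.sqrt (∑ a ∈ s, w a * u a ^ 2) * Real.sqrt (∑ a ∈ s, w a * v a ^ 2) := by
  have h := Finset.sum_mul_sq_le_sq_mul_sq s (fun a => Real.sqrt (w a) * u a)
    (fun a => Real.sqrt (w a) * v a)
  have e1 : ∑ a ∈ s, (Real.sqrt (w a) * u a) * (Real.sqrt (w a) * v a)
      = ∑ a ∈ s, w a * (u a * v a) := by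
    refine Finset.sum_congr rfl fun a ha => ?_
    have : Real.sqrt (w a) * Real.sqrt (w a) = w a := Real.mul_self_sqrt (hw a ha)
    calc Real.sqrt (w a) * u a * (Real.sqrt (w a) * v a)
        = (Real.sqrt (w a) * Real.sqrt (w a)) * (u a * v a) := by ring
      _ = w a * (u a * v a) := by rw [this]
  have e2 : ∑ a ∈ s, (Real.sqrt (w a) * u a) ^ 2 = ∑ a ∈ s, w a * u a ^ 2 := by
    refine Finset.sum_congr rfl fun a ha => ?_
    rw [mul_pow, Real.sq_sqrt (hw a ha)]
  have e3 : ∑ a ∈ s, (Real.sqrt (w a) * v a) ^ 2 = ∑ a ∈ s, w a * v a ^ 2 := by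
    refine Finset.sum_congr rfl fun a ha => ?_
    rw [mul_pow, Real.sq_sqrt (hw a ha)]
  rw [e1, e2, e3] at h
  calc ∑ a ∈ s, w a * (u a * v a) ≤ |∑ a ∈ s, w a * (u a * v a)| := le_abs_self _
  _ = Real.sqrt ((∑ a ∈ s, w a * (u a * v a)) ^ 2) := (Real.sqrt_sq_eq_abs _).symm
  _ ≤ Real.sqrt ((∑ a ∈ s, w a * u a ^ 2) * ∑ a ∈ s, w a * v a ^ 2) := Real.sqrt_le_sqrt h
  _ = _ := Real.sqrt_mul (Finset.sum_nonneg fun a ha => mul_nonneg (hw a ha) (sq_nonneg _)) _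

private lemma tri₁ {α : Type*} {P : ℝ} (hP : 0 ≤ P) (s : Finset α) (w u v : α → ℝ)
    (hw : ∀ a ∈ s, 0 ≤ w a) :
    Real.sqrt (P + ∑ a ∈ s, w a * (u a + v a) ^ 2) ≤
      Real.sqrt (P + ∑ a ∈ s, w a * u a ^ 2) + Real.sqrt (∑ a ∈ s, w a * v a ^ 2) := by
  have hA0 : 0 ≤ ∑ a ∈ s, w a * u a ^ 2 :=
    Finset.sum_nonneg fun a ha => mul_nonneg (hw a ha) (sq_nonneg _)
  have hB0 : 0 ≤ ∑ a ∈ s, w a * v a ^ 2 :=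
    Finset.sum_nonneg fun a ha => mul_nonneg (hw a ha) (sq_nonneg _)
  have hC := cauchy_w s w u v hw
  have hexp : ∑ a ∈ s, w a * (u a + v a) ^ 2 =
      ∑ a ∈ s, w a * u a ^ 2 + 2 * ∑ a ∈ s, w a * (u a * v a) + ∑ a ∈ s, w a * v a ^ 2 := by
    rw [Finset.mul_sum, ← Finset.sum_add_distrib, ← Finset.sum_add_distrib]
    refine Finset.sum_congr rfl fun a _ => by ring
  rw [hexp]
  apply sqrt_le_of_le_sq (by positivity)
  have hPA : Real.sqrt (P + ∑ a ∈ s, w a * u a ^ 2) ^ 2 = P + ∑ a ∈ s, w a * u a ^ 2 :=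
    Real.sq_sqrt (by linarith)
  have hB : Real.sqrt (∑ a ∈ s, w a * v a ^ 2) ^ 2 = ∑ a ∈ s, w a * v a ^ 2 :=
    Real.sq_sqrt hB0
  have hmono : Real.sqrt (∑ a ∈ s, w a * u a ^ 2) ≤ Real.sqrt (P + ∑ a ∈ s, w a * u a ^ 2) :=
    Real.sqrt_le_sqrt (by linarith)
  have hC2 : ∑ a ∈ s, w a * (u a * v a) ≤
      Real.sqrt (P + ∑ a ∈ s, w a * u a ^ 2) * Real.sqrt (∑ a ∈ s, w a * v a ^ 2) :=
    le_trans hC (mul_le_mul_of_nonneg_right hmono (Real.sqrt_nonneg _))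
  nlinarith [Real.sqrt_nonneg (P + ∑ a ∈ s, w a * u a ^ 2), Real.sqrt_nonneg (∑ a ∈ s, w a * v a ^ 2)]

private lemma edgesFrom_finite (G : WGraph V) (v : V) :
    {e : V × V | e ∈ G.E ∧ e.2 = v}.Finite := by
  apply ((G.locfin v).image Prod.swap).subset
  rintro ⟨a, b⟩ ⟨he, rfl⟩
  exact ⟨(b, a), ⟨G.symm _ he, rfl⟩, rfl⟩

private lemma touch_finite (G : WGraph V) {S : Set V} (hS : S.Finite) :
    {e : V × V | e ∈ G.E ∧ (e.1 ∈ S ∨ e.2 ∈ S)}.Finite := by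
  apply ((hS.biUnion fun v _ => G.locfin v).union
    (hS.biUnion fun v _ => edgesFrom_finite G v)).subset
  rintro e ⟨he, h1 | h2⟩
  · exact Or.inl (Set.mem_biUnion h1 ⟨he, rfl⟩)
  · exact Or.inr (Set.mem_biUnion h2 ⟨he, rfl⟩)

private lemma deltaOp_support (G : WGraph V) (φ : V × V → ℝ) :
    Function.support (deltaOp G φ) ⊆ Prod.snd '' Function.support φ := by
  intro x hx
  by_contra hc
  apply hx
  have hz : ∑ᶠ e ∈ {e : V × V | e ∈ G.E ∧ e.2 = x}, G.r e * φ e = 0 := by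
    apply finsum_mem_of_eqOn_zero
    intro e he
    have : φ e = 0 := by
      by_contra hφ
      exact hc ⟨e, hφ, he.2⟩
    simp [this]
  unfold deltaOp
  rw [hz, mul_zero]

open scoped Classical in
private lemma finsum_mem_eq_filter_sum {α : Type*} (S : Set α) (g : α → ℝ) (F : Finset α)
    (h : S ∩ Function.support g ⊆ ↑F) :
    ∑ᶠ x ∈ S, g x = ∑ x ∈ F.filter (fun x => x ∈ S), g x := by
  classical
  apply finsum_mem_eq_sum_of_inter_support_eq
  ext x
  simp only [Set.mem_inter_iff, Finset.coe_filter, Set.mem_setOf_eq, Function.mem_support]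
  constructor
  · rintro ⟨hS, hg⟩; exact ⟨⟨h ⟨hS, hg⟩, hS⟩, hg⟩
  · rintro ⟨⟨_, hS⟩, hg⟩; exact ⟨hS, hg⟩

private lemma mem_D_swap (G : WGraph V) (K : Set V) {e : V × V}
    (h : (e.2, e.1) ∈ G.E \ EK G K) : e ∈ G.E \ EK G K := by
  obtain ⟨hE, hEK⟩ := h
  refine ⟨?_, ?_⟩
  · have := G.symm _ hE; simpa using this
  · rintro ⟨he, h1, h2⟩
    exact hEK ⟨G.symm _ he, h2, h1⟩

set_option maxHeartbeats 2000000 in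
theorem stmt6 (G : WGraph V) [Infinite V] (hconn : G.Connected) (K : Set V)
    (hK : K.Finite) (hNP : NonParabolicAt G K) (Kt : Set V) (Et : Set (V × V))
    (hN : IsNbhd G K Kt Et) (VU : Set V) (EU : Set (V × V)) (hVU : VU.Finite)
    (hEU : EU.Finite) (hEUE : EU ⊆ G.E) :
    ∃ C > 0, ∀ f : V → ℝ, ∀ φ : V × V → ℝ,
      FinSupp f → FinSupp φ → Skew φ → Function.support φ ⊆ G.E →
      C * Real.sqrt (sqnormOn G VU EU f φ) ≤
        Real.sqrt (sqnormOn G Set.univ G.E (deltaOp G φ) (dOp f)) +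
          Real.sqrt (sqnormOn G Kt Et f φ) := by
  classical
  obtain ⟨hKtF, hEtF, hKKt, hEKEt, hEtE, hEtEnd⟩ := hN
  set D : Set (V × V) := G.E \ EK G K with hD
  have hBdsub : edgeBdry G K ⊆ {e : V × V | e ∈ G.E ∧ (e.1 ∈ K ∨ e.2 ∈ K)} := by
    rintro e ⟨he, h⟩; exact ⟨he, by tauto⟩
  have hBd : (edgeBdry G K).Finite := (touch_finite G hK).subset hBdsub
  obtain ⟨C, hC, hNPa⟩ := hNP (VU ∩ Kᶜ) (EU ∩ D) (hVU.inter_of_left _) (hEU.inter_of_left _)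
      Set.inter_subset_right Set.inter_subset_right
  set M : ℝ := ∑ e ∈ hBd.toFinset, G.r e * ((G.c e.1)⁻¹ + (G.c e.2)⁻¹) with hMdef
  have hM0 : 0 ≤ M := Finset.sum_nonneg fun e _ => by
    have h1 := (G.cpos e.1); have h2 := (G.cpos e.2); have h3 := (G.rpos e); positivity
  have hden : (0:ℝ) < 1 + Real.sqrt M + C := by nlinarith [Real.sqrt_nonneg M]
  refine ⟨C / (1 + Real.sqrt M + C), div_pos hC hden, ?_⟩
  intro f φ hf hφ hskew hφE
  set f' : V → ℝ := Set.indicator Kᶜ f with hf'def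
  set φ' : V × V → ℝ := Set.indicator D φ with hφ'def
  have hsf' : Function.support f' ⊆ Function.support f := by
    rw [hf'def, Set.support_indicator]; exact Set.inter_subset_right
  have hsφ' : Function.support φ' ⊆ Function.support φ := by
    rw [hφ'def, Set.support_indicator]; exact Set.inter_subset_right
  have hf'K : Function.support f' ⊆ Kᶜ := by
    rw [hf'def, Set.support_indicator]; exact Set.inter_subset_left
  have hφ'D : Function.support φ' ⊆ D := by
    rw [hφ'def, Set.support_indicator]; exact Set.inter_subset_left
  have hφ'skew : Skew φ' := by
    intro e
    by_cases h : e ∈ D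
    · have h2 : (e.2, e.1) ∈ D := by
        apply mem_D_swap G K (e := (e.2, e.1))
        simpa [hD] using h
      rw [hφ'def]
      rw [Set.indicator_of_mem h2, Set.indicator_of_mem h, hskew]
    · have h2 : (e.2, e.1) ∉ D := fun hc => h (mem_D_swap G K hc)
      rw [hφ'def, Set.indicator_of_notMem h2, Set.indicator_of_notMem h, neg_zero]
  have hstar := hNPa f' φ' (hf.subset hsf') (hφ.subset hsφ') hφ'skew hf'K hφ'D
  -- big finsets
  have htouch : {e : V × V | e ∈ G.E ∧ (e.1 ∈ Function.support f ∨ e.2 ∈ Function.support f)}.Finite :=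
    touch_finite G hf
  set FV : Finset V := hf.toFinset ∪ (hφ.image Prod.snd).toFinset ∪ hVU.toFinset
      ∪ hKtF.toFinset ∪ hK.toFinset with hFVdef
  set FE : Finset (V × V) := hφ.toFinset ∪ hEU.toFinset ∪ hEtF.toFinset
      ∪ hBd.toFinset ∪ htouch.toFinset with hFEdef
  have hFVf : Function.support f ⊆ ↑FV := by
    intro x hx; simp [hFVdef, Set.Finite.mem_toFinset]; left; exact (Set.Finite.mem_toFinset hf).mpr hx
  have hFVδ : Prod.snd '' Function.support φ ⊆ ↑FV := by
    intro x hx; simp only [hFVdef, Finset.coe_union, Set.Finite.coe_toFinset]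
    left; left; left; right; exact hx
  have hFVVU : VU ⊆ ↑FV := by
    intro x hx; simp [hFVdef, Set.Finite.mem_toFinset]; tauto
  have hFVKt : Kt ⊆ ↑FV := by
    intro x hx; simp [hFVdef, Set.Finite.mem_toFinset]; tauto
  have hFVK : K ⊆ ↑FV := by
    intro x hx; simp [hFVdef, Set.Finite.mem_toFinset]; tauto
  have hFEφ : Function.support φ ⊆ ↑FE := by
    intro e he; simp [hFEdef, Set.Finite.mem_toFinset]; left; exact (Set.Finite.mem_toFinset hφ).mpr he
  have hFEt : Et ⊆ ↑FE := by
    intro e he; simp [hFEdef, Set.Finite.mem_toFinset]; tauto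
  have hFEBd : edgeBdry G K ⊆ ↑FE := by
    intro e he; simp [hFEdef, Set.Finite.mem_toFinset]; tauto
  have hFEtouch : {e : V × V | e ∈ G.E ∧ (e.1 ∈ Function.support f ∨ e.2 ∈ Function.support f)} ⊆ ↑FE := by
    intro e he; simp only [hFEdef, Finset.coe_union, Set.Finite.coe_toFinset]
    right; exact he
  have hFEEU : EU ⊆ ↑FE := by
    intro e he; simp [hFEdef, Set.Finite.mem_toFinset]; tauto
  set w : V × V → ℝ := fun e => (1/2) * G.r e with hwdef
  have hw0 : ∀ e, 0 ≤ w e := fun e => by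
    have := G.rpos e; rw [hwdef]; positivity
  have half_sum : ∀ (t : Finset (V × V)) (ψ : V × V → ℝ),
      (1/2 : ℝ) * ∑ e ∈ t, G.r e * ψ e ^ 2 = ∑ e ∈ t, w e * ψ e ^ 2 := by
    intro t ψ
    rw [Finset.mul_sum]
    exact Finset.sum_congr rfl fun e _ => by rw [hwdef]; ring
  have convV : ∀ (S : Set V) (g : V → ℝ), Function.support g ⊆ ↑FV →
      ∑ᶠ x ∈ S, G.c x * g x ^ 2 = ∑ x ∈ FV.filter (fun x => x ∈ S), G.c x * g x ^ 2 := by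
    refine fun S g hg => finsum_mem_eq_filter_sum S _ FV ?_
    rintro x ⟨-, hx⟩
    apply hg
    simp only [Function.mem_support] at hx ⊢
    intro h0; apply hx; rw [h0]; ring
  have convE : ∀ (T : Set (V × V)) (ψ : V × V → ℝ), Function.support ψ ⊆ ↑FE →
      ∑ᶠ e ∈ T, G.r e * ψ e ^ 2 = ∑ e ∈ FE.filter (fun e => e ∈ T), G.r e * ψ e ^ 2 := by
    refine fun T ψ hψ => finsum_mem_eq_filter_sum T _ FE ?_
    rintro e ⟨-, he⟩
    apply hψ
    simp only [Function.mem_support] at he ⊢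
    intro h0; apply he; rw [h0]; ring
  have convEd : ∀ (T : Set (V × V)) (g : V → ℝ), T ⊆ G.E →
      Function.support g ⊆ Function.support f →
      ∑ᶠ e ∈ T, G.r e * (dOp g) e ^ 2 = ∑ e ∈ FE.filter (fun e => e ∈ T), G.r e * (dOp g) e ^ 2 := by
    intro T g hT hg
    apply finsum_mem_eq_filter_sum
    rintro e ⟨heT, he⟩
    apply hFEtouch
    refine ⟨hT heT, ?_⟩
    by_contra hcon
    push_neg at hcon
    obtain ⟨h1, h2⟩ := hcon
    have g1 : g e.1 = 0 := by by_contra hh; exact h1 (hg hh)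
    have g2 : g e.2 = 0 := by by_contra hh; exact h2 (hg hh)
    simp only [Function.mem_support] at he
    apply he
    simp [dOp, g1, g2]
  have hsδ : Function.support (deltaOp G φ) ⊆ ↑FV := (deltaOp_support G φ).trans hFVδ
  have hsδ' : Function.support (deltaOp G φ') ⊆ ↑FV :=
    (deltaOp_support G φ').trans ((Set.image_mono hsφ').trans hFVδ)
  have E1 : sqnormOn G VU EU f φ =
      (∑ x ∈ FV.filter (fun x => x ∈ VU), G.c x * f x ^ 2)
        + ∑ e ∈ FE.filter (fun e => e ∈ EU), w e * φ e ^ 2 := by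
    rw [sqnormOn, convV VU f hFVf, convE EU φ hFEφ, half_sum]
  have E2 : sqnormOn G (VU ∩ Kᶜ) (EU ∩ D) f' φ' =
      (∑ x ∈ FV.filter (fun x => x ∈ VU ∩ Kᶜ), G.c x * f' x ^ 2)
        + ∑ e ∈ FE.filter (fun e => e ∈ EU ∩ D), w e * φ' e ^ 2 := by
    rw [sqnormOn, convV _ f' (hsf'.trans hFVf), convE _ φ' (hsφ'.trans hFEφ), half_sum]; congr 1 <;> exact Finset.sum_congr (Finset.filter_congr_decidable _ _ _) fun _ _ => rfl
  have E3 : sqnormOn G Kt Et f φ =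
      (∑ x ∈ FV.filter (fun x => x ∈ Kt), G.c x * f x ^ 2)
        + ∑ e ∈ FE.filter (fun e => e ∈ Et), w e * φ e ^ 2 := by
    rw [sqnormOn, convV Kt f hFVf, convE Et φ hFEφ, half_sum]
  have E4 : sqnormOn G Set.univ G.E (deltaOp G φ) (dOp f) =
      (∑ x ∈ FV.filter (fun x => x ∈ (Set.univ : Set V)), G.c x * (deltaOp G φ) x ^ 2)
        + ∑ e ∈ FE.filter (fun e => e ∈ G.E), w e * (dOp f) e ^ 2 := by
    rw [sqnormOn, convV Set.univ _ hsδ, convEd G.E f subset_rfl subset_rfl, half_sum]; congr 1 <;> exact Finset.sum_congr (Finset.filter_congr_decidable _ _ _) fun _ _ => rfl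
  have E5 : sqnormOn G Kᶜ D (deltaOp G φ') (dOp f') =
      (∑ x ∈ FV.filter (fun x => x ∈ Kᶜ), G.c x * (deltaOp G φ') x ^ 2)
        + ∑ e ∈ FE.filter (fun e => e ∈ D), w e * (dOp f') e ^ 2 := by
    rw [sqnormOn, convV Kᶜ _ hsδ', convEd D f' Set.diff_subset hsf', half_sum]; congr 1 <;> exact Finset.sum_congr (Finset.filter_congr_decidable _ _ _) fun _ _ => rfl
  have hnnV : ∀ (s : Finset V) (g : V → ℝ), 0 ≤ ∑ x ∈ s, G.c x * g x ^ 2 :=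
    fun s g => Finset.sum_nonneg fun x _ => mul_nonneg (G.cpos x).le (sq_nonneg _)
  have hnnE : ∀ (s : Finset (V × V)) (ψ : V × V → ℝ), 0 ≤ ∑ e ∈ s, w e * ψ e ^ 2 :=
    fun s ψ => Finset.sum_nonneg fun e _ => mul_nonneg (hw0 e) (sq_nonneg _)
  set η : V × V → ℝ := fun e => dOp f' e - dOp f e with hηdef
  set a1 := ∑ x ∈ FV.filter (fun x => x ∈ VU), G.c x * f x ^ 2 with ha1
  set b1 := ∑ e ∈ FE.filter (fun e => e ∈ EU), w e * φ e ^ 2 with hb1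
  set a2 := ∑ x ∈ FV.filter (fun x => x ∈ VU ∩ Kᶜ), G.c x * f' x ^ 2 with ha2
  set b2 := ∑ e ∈ FE.filter (fun e => e ∈ EU ∩ D), w e * φ' e ^ 2 with hb2
  set a3 := ∑ x ∈ FV.filter (fun x => x ∈ Kt), G.c x * f x ^ 2 with ha3
  set b3 := ∑ e ∈ FE.filter (fun e => e ∈ Et), w e * φ e ^ 2 with hb3
  set a4 := ∑ x ∈ FV.filter (fun x => x ∈ (Set.univ : Set V)), G.c x * deltaOp G φ x ^ 2 with ha4
  set b4 := ∑ e ∈ FE.filter (fun e => e ∈ G.E), w e * dOp f e ^ 2 with hb4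
  set a5 := ∑ x ∈ FV.filter (fun x => x ∈ Kᶜ), G.c x * deltaOp G φ' x ^ 2 with ha5
  set b5 := ∑ e ∈ FE.filter (fun e => e ∈ D), w e * dOp f' e ^ 2 with hb5
  set bD := ∑ e ∈ FE.filter (fun e => e ∈ D), w e * dOp f e ^ 2 with hbD
  set bη := ∑ e ∈ FE.filter (fun e => e ∈ D), w e * η e ^ 2 with hbη
  set aK := ∑ x ∈ FV.filter (fun x => x ∈ K), G.c x * f x ^ 2 with haK
  -- Step 1 : a1 ≤ a2 + a3, b1 ≤ b2 + b3
  have hAVU : a1 ≤ a2 + a3 := by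
    rw [ha1, ha2, ha3,
      ← Finset.sum_filter_add_sum_filter_not (FV.filter (fun x => x ∈ VU)) (fun x => x ∈ Kᶜ)]
    apply add_le_add
    · apply le_of_eq
      rw [Finset.filter_filter]
      apply Finset.sum_congr
      · apply Finset.filter_congr
        intro x _
        simp [Set.mem_inter_iff]
      · intro x hx
        have hxK : x ∈ Kᶜ := (Finset.mem_filter.mp hx).2.2
        rw [hf'def, Set.indicator_of_mem hxK]
    · apply Finset.sum_le_sum_of_subset_of_nonneg
      · intro x hx
        simp only [Finset.mem_filter] at hx ⊢
        exact ⟨hx.1.1, hKKt (not_not.mp hx.2)⟩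
      · exact fun x _ _ => mul_nonneg (G.cpos x).le (sq_nonneg _)
  have hBEU : b1 ≤ b2 + b3 := by
    rw [hb1, hb2, hb3,
      ← Finset.sum_filter_add_sum_filter_not (FE.filter (fun e => e ∈ EU)) (fun e => e ∈ D)]
    apply add_le_add
    · apply le_of_eq
      rw [Finset.filter_filter]
      apply Finset.sum_congr
      · apply Finset.filter_congr
        intro e _
        simp [Set.mem_inter_iff]
      · intro e he
        have heD : e ∈ D := (Finset.mem_filter.mp he).2.2
        rw [hφ'def, Set.indicator_of_mem heD]
    · apply Finset.sum_le_sum_of_subset_of_nonneg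
      · intro e he
        simp only [Finset.mem_filter] at he
        obtain ⟨⟨heFE, heEU⟩, heD⟩ := he
        have heE : e ∈ G.E := hEUE heEU
        have heEK : e ∈ EK G K := by
          by_contra hcon
          exact heD ⟨heE, hcon⟩
        exact Finset.mem_filter.mpr ⟨heFE, hEKEt (Or.inl heEK)⟩
      · exact fun e _ _ => mul_nonneg (hw0 e) (sq_nonneg _)
  -- Step 2 : a5 ≤ a4, bD ≤ b4
  have hdelta : ∀ x ∈ Kᶜ, deltaOp G φ' x = deltaOp G φ x := by
    intro x hx
    unfold deltaOp
    congr 1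
    apply finsum_mem_congr rfl
    intro e he
    have heD : e ∈ D := ⟨he.1, fun hEK => hx (he.2 ▸ hEK.2.2)⟩
    rw [hφ'def, Set.indicator_of_mem heD]
  have hAKc : a5 ≤ a4 := by
    rw [ha5, ha4, Finset.sum_congr rfl
      (fun x hx => by rw [hdelta x (Finset.mem_filter.mp hx).2])]
    apply Finset.sum_le_sum_of_subset_of_nonneg
    · intro x hx
      simp only [Finset.mem_filter] at hx ⊢
      exact ⟨hx.1, Set.mem_univ x⟩
    · exact fun x _ _ => mul_nonneg (G.cpos x).le (sq_nonneg _)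
  have hBDb : bD ≤ b4 := by
    rw [hbD, hb4]
    apply Finset.sum_le_sum_of_subset_of_nonneg
    · intro e he
      simp only [Finset.mem_filter] at he ⊢
      exact ⟨he.1, he.2.1⟩
    · exact fun e _ _ => mul_nonneg (hw0 e) (sq_nonneg _)
  -- Step 3 : bη ≤ M * aK
  have hAKnn : 0 ≤ aK := hnnV _ _
  have hkey : ∀ x ∈ K, G.c x * f x ^ 2 ≤ aK := by
    intro x hx
    by_cases hfx : f x = 0
    · rw [hfx]
      simpa using hAKnn
    · refine Finset.single_le_sum (fun i _ => mul_nonneg (G.cpos i).le (sq_nonneg _)) ?_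
      exact Finset.mem_filter.mpr ⟨hFVf hfx, hx⟩
  have hηzero : ∀ e ∈ D, e ∉ edgeBdry G K → η e = 0 := by
    intro e heD heB
    have h1 : e.1 ∉ K := by
      by_contra h1
      by_cases h2 : e.2 ∈ K
      · exact heD.2 ⟨heD.1, h1, h2⟩
      · exact heB ⟨heD.1, Or.inl ⟨h1, h2⟩⟩
    have h2 : e.2 ∉ K := fun h2 => heB ⟨heD.1, Or.inr ⟨h1, h2⟩⟩
    have e1 : f' e.1 = f e.1 := by rw [hf'def]; exact Set.indicator_of_mem (Set.mem_compl h1) f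
    have e2 : f' e.2 = f e.2 := by rw [hf'def]; exact Set.indicator_of_mem (Set.mem_compl h2) f
    simp [hηdef, dOp, e1, e2]
  have hBη : bη ≤ M * aK := by
    rw [hbη, ← Finset.sum_filter_add_sum_filter_not (FE.filter (fun e => e ∈ D))
      (fun e => e ∈ edgeBdry G K)]
    have hz : ∑ e ∈ (FE.filter (fun e => e ∈ D)).filter (fun e => ¬ e ∈ edgeBdry G K),
        w e * η e ^ 2 = 0 := by
      apply Finset.sum_eq_zero
      intro e he
      simp only [Finset.mem_filter] at he
      rw [hηzero e he.1.2 he.2]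
      ring
    rw [hz, add_zero]
    have hterm : ∀ e ∈ (FE.filter (fun e => e ∈ D)).filter (fun e => e ∈ edgeBdry G K),
        w e * η e ^ 2 ≤ (G.r e * ((G.c e.1)⁻¹ + (G.c e.2)⁻¹)) * aK := by
      intro e he
      simp only [Finset.mem_filter] at he
      have hr := G.rpos e
      have hc1 := G.cpos e.1
      have hc2 := G.cpos e.2
      have ha : (f' e.1 - f e.1) ^ 2 ≤ (G.c e.1)⁻¹ * aK := by
        rw [le_inv_mul_iff₀ hc1]
        by_cases h : e.1 ∈ Kᶜ
        · rw [hf'def, Set.indicator_of_mem h]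
          simpa using hAKnn
        · rw [hf'def, Set.indicator_of_notMem h]
          have hq : ((0:ℝ) - f e.1) ^ 2 = f e.1 ^ 2 := by ring
          rw [hq]
          exact hkey e.1 (not_not.mp h)
      have hb : (f' e.2 - f e.2) ^ 2 ≤ (G.c e.2)⁻¹ * aK := by
        rw [le_inv_mul_iff₀ hc2]
        by_cases h : e.2 ∈ Kᶜ
        · rw [hf'def, Set.indicator_of_mem h]
          simpa using hAKnn
        · rw [hf'def, Set.indicator_of_notMem h]
          have hq : ((0:ℝ) - f e.2) ^ 2 = f e.2 ^ 2 := by ring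
          rw [hq]
          exact hkey e.2 (not_not.mp h)
      have hη2 : η e = (f' e.2 - f e.2) - (f' e.1 - f e.1) := by
        simp [hηdef, dOp]
        ring
      have hwe : w e = 1 / 2 * G.r e := by rw [hwdef]
      rw [hwe, hη2]
      nlinarith [ha, hb, sq_nonneg ((f' e.1 - f e.1) + (f' e.2 - f e.2)), hr.le,
        mul_le_mul_of_nonneg_left (add_le_add ha hb) hr.le]
    calc ∑ e ∈ (FE.filter (fun e => e ∈ D)).filter (fun e => e ∈ edgeBdry G K), w e * η e ^ 2
        ≤ ∑ e ∈ (FE.filter (fun e => e ∈ D)).filter (fun e => e ∈ edgeBdry G K),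
            (G.r e * ((G.c e.1)⁻¹ + (G.c e.2)⁻¹)) * aK := Finset.sum_le_sum hterm
      _ = (∑ e ∈ (FE.filter (fun e => e ∈ D)).filter (fun e => e ∈ edgeBdry G K),
            G.r e * ((G.c e.1)⁻¹ + (G.c e.2)⁻¹)) * aK := (Finset.sum_mul _ _ _).symm
      _ ≤ M * aK := by
          apply mul_le_mul_of_nonneg_right _ hAKnn
          rw [hMdef]
          apply Finset.sum_le_sum_of_subset_of_nonneg
          · intro e he
            simp only [Finset.mem_filter] at he
            exact hBd.mem_toFinset.mpr he.2
          · intro e _ _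
            have h1 := G.cpos e.1
            have h2 := G.cpos e.2
            have h3 := G.rpos e
            positivity
  -- Step 4 : aK ≤ a3
  have hAKle : aK ≤ a3 := by
    rw [haK, ha3]
    apply Finset.sum_le_sum_of_subset_of_nonneg
    · intro x hx
      simp only [Finset.mem_filter] at hx ⊢
      exact ⟨hx.1, hKKt hx.2⟩
    · exact fun x _ _ => mul_nonneg (G.cpos x).le (sq_nonneg _)
  -- nonnegativity of the named sums
  have h22 : 0 ≤ a2 + b2 := by
    have := hnnV (FV.filter (fun x => x ∈ VU ∩ Kᶜ)) f'
    have := hnnE (FE.filter (fun e => e ∈ EU ∩ D)) φ'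
    rw [ha2, hb2]; positivity
  have h33 : 0 ≤ a3 + b3 := by
    have h1 : 0 ≤ a3 := by rw [ha3]; exact hnnV _ _
    have h2 : 0 ≤ b3 := by rw [hb3]; exact hnnE _ _
    linarith
  have h44 : 0 ≤ a4 + b4 := by
    have h1 : 0 ≤ a4 := by rw [ha4]; exact hnnV _ _
    have h2 : 0 ≤ b4 := by rw [hb4]; exact hnnE _ _
    linarith
  have h5n : 0 ≤ a5 := by rw [ha5]; exact hnnV _ _
  have hbDn : 0 ≤ bD := by rw [hbD]; exact hnnE _ _
  have h3nb : 0 ≤ b3 := by rw [hb3]; exact hnnE _ _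
  -- triangle inequality on the perturbed operator
  have htri : Real.sqrt (a5 + b5) ≤ Real.sqrt (a5 + bD) + Real.sqrt bη := by
    have hre : b5 = ∑ e ∈ FE.filter (fun e => e ∈ D), w e * (dOp f e + η e) ^ 2 := by
      rw [hb5]
      exact Finset.sum_congr rfl fun e _ => by simp only [hηdef]; ring
    rw [hre, hbD, hbη]
    exact tri₁ h5n _ w (dOp f) η (fun e _ => hw0 e)
  have hmid : Real.sqrt (a5 + bD) ≤ Real.sqrt (a4 + b4) :=
    Real.sqrt_le_sqrt (by linarith)
  have hηsq : Real.sqrt bη ≤ Real.sqrt M * Real.sqrt (a3 + b3) := by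
    calc Real.sqrt bη ≤ Real.sqrt (M * aK) := Real.sqrt_le_sqrt hBη
      _ = Real.sqrt M * Real.sqrt aK := Real.sqrt_mul hM0 _
      _ ≤ Real.sqrt M * Real.sqrt (a3 + b3) := by
          apply mul_le_mul_of_nonneg_left _ (Real.sqrt_nonneg M)
          apply Real.sqrt_le_sqrt
          linarith
  rw [E2, E5] at hstar
  have hL : Real.sqrt (a1 + b1) ≤ Real.sqrt (a2 + b2) + Real.sqrt (a3 + b3) :=
    tri₀ h22 h33 (by linarith)
  have hchain : C * Real.sqrt (a2 + b2) ≤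
      Real.sqrt (a4 + b4) + Real.sqrt M * Real.sqrt (a3 + b3) :=
    le_trans hstar (le_trans htri (add_le_add hmid hηsq))
  rw [E1, E3, E4, div_mul_eq_mul_div, div_le_iff₀ hden]
  have n4 := Real.sqrt_nonneg (a4 + b4)
  have n3 := Real.sqrt_nonneg (a3 + b3)
  have nM := Real.sqrt_nonneg M
  have h1 : C * Real.sqrt (a1 + b1) ≤
      C * Real.sqrt (a2 + b2) + C * Real.sqrt (a3 + b3) := by
    rw [← mul_add]
    exact mul_le_mul_of_nonneg_left hL hC.le
  have h3 : Real.sqrt (a4 + b4) + Real.sqrt M * Real.sqrt (a3 + b3)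
        + C * Real.sqrt (a3 + b3) ≤
      (Real.sqrt (a4 + b4) + Real.sqrt (a3 + b3)) * (1 + Real.sqrt M + C) := by
    have hx : (Real.sqrt (a4 + b4) + Real.sqrt (a3 + b3)) * (1 + Real.sqrt M + C)
        = Real.sqrt (a4 + b4) + Real.sqrt (a4 + b4) * Real.sqrt M
          + Real.sqrt (a4 + b4) * C + Real.sqrt (a3 + b3)
          + Real.sqrt M * Real.sqrt (a3 + b3) + C * Real.sqrt (a3 + b3) := by ring
    rw [hx]
    have p1 : 0 ≤ Real.sqrt (a4 + b4) * Real.sqrt M := mul_nonneg n4 nM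
    have p2 : 0 ≤ Real.sqrt (a4 + b4) * C := mul_nonneg n4 hC.le
    linarith
  linarith
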